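/- The first-order (equivalently second-order, since the second derivative at 0 vanishes) Taylor approximation of the Boltzmann price around balanced imbalance satisfies |P^{boltzmann}(β) - (P^{mid} + (β(P^a - P^b)/2)·θ)| ≤ C·|θ|³ for some constant C depending only on β and P^a - P^b, uniformly for θ ∈ [-1/2, 1/2]. -/
import Mathlib

open Real

lemma hasDerivAt_tanh' (x : ℝ) : HasDerivAt Real.tanh (1 / Real.cosh x ^ 2) x := by
  have h : HasDerivAt (fun t => Real.sinh t / Real.cosh t)
      ((Real.cosh x * Real.cosh x - Real.sinh x * Real.sinh x) / Real.cosh x ^ 2) x :=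
    (Real.hasDerivAt_sinh x).div (Real.hasDerivAt_cosh x) (Real.cosh_pos x).ne'
  have h2 : (Real.cosh x * Real.cosh x - Real.sinh x * Real.sinh x) = 1 := by
    have := Real.cosh_sq_sub_sinh_sq x; nlinarith
  rw [h2] at h
  have hfun : (fun t => Real.sinh t / Real.cosh t) = Real.tanh := by
    funext t; rw [Real.tanh_eq_sinh_div_cosh]
  rwa [hfun] at h

lemma abs_tanh_le (x : ℝ) : |Real.tanh x| ≤ |x| := by
  have h := Convex.norm_image_sub_le_of_norm_hasDerivWithin_le
    (f := Real.tanh) (f' := fun t => 1 / Real.cosh t ^ 2) (C := 1)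
    (fun t _ => (hasDerivAt_tanh' t).hasDerivWithinAt)
    (fun t _ => by
      have hc := Real.cosh_pos t
      rw [Real.norm_eq_abs, abs_of_nonneg (by positivity), div_le_one (by positivity)]
      nlinarith [Real.one_le_cosh t])
    (convex_univ) (Set.mem_univ 0) (Set.mem_univ x)
  simpa [Real.tanh_zero] using h

lemma abs_tanh_sub_le (x : ℝ) : |Real.tanh x - x| ≤ |x| ^ 3 := by
  have h := Convex.norm_image_sub_le_of_norm_hasDerivWithin_le
    (f := fun t => Real.tanh t - t) (f' := fun t => 1 / Real.cosh t ^ 2 - 1) (C := |x| ^ 2)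
    (fun t _ => ((hasDerivAt_tanh' t).sub (hasDerivAt_id t)).hasDerivWithinAt)
    (fun t ht => by
      have hc := Real.cosh_pos t
      have h1 : 1 / Real.cosh t ^ 2 - 1 = -(Real.tanh t ^ 2) := by
        rw [Real.tanh_eq_sinh_div_cosh]
        have := Real.cosh_sq_sub_sinh_sq t
        field_simp
        nlinarith
      simp only [Real.norm_eq_abs]
      rw [h1, abs_neg, abs_pow]
      have h2 : |Real.tanh t| ≤ |t| := abs_tanh_le t
      have h3 : |t| ≤ |x| := by
        simp only [Set.mem_Icc] at ht
        rw [abs_le]; exact ⟨ht.1, ht.2⟩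
      nlinarith [abs_nonneg t, abs_nonneg (Real.tanh t)])
    (convex_Icc (-|x|) |x|)
    (Set.mem_Icc.2 ⟨neg_nonpos.2 (abs_nonneg x), abs_nonneg x⟩)
    (Set.mem_Icc.2 ⟨neg_abs_le x, le_abs_self x⟩)
  simp only [Real.tanh_zero, sub_zero, Real.norm_eq_abs] at h
  calc |Real.tanh x - x| ≤ |x| ^ 2 * |x| := h
    _ = |x| ^ 3 := by ring

/-- Taylor approximation of the Boltzmann price around balanced imbalance:
the error of the linear approximation is `O(|θ|³)` uniformly on `[-1/2, 1/2]`. -/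
theorem stmt_6 (β Pb Pa : ℝ) (hβ : 0 ≤ β) (hP : Pb ≤ Pa) :
    ∃ C : ℝ, ∀ θ : ℝ, θ ∈ Set.Icc (-(1 / 2) : ℝ) (1 / 2) →
      |(Real.exp (-β * (1 / 2 + θ)) * Pb + Real.exp (-β * (1 / 2 - θ)) * Pa) /
          (Real.exp (-β * (1 / 2 + θ)) + Real.exp (-β * (1 / 2 - θ))) -
        ((Pb + Pa) / 2 + β * (Pa - Pb) / 2 * θ)| ≤ C * |θ| ^ 3 := by
  refine ⟨(Pa - Pb) / 2 * β ^ 3, fun θ _ => ?_⟩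
  set x := β * θ with hx
  have key : (Real.exp (-β * (1 / 2 + θ)) * Pb + Real.exp (-β * (1 / 2 - θ)) * Pa) /
          (Real.exp (-β * (1 / 2 + θ)) + Real.exp (-β * (1 / 2 - θ))) -
        ((Pb + Pa) / 2 + β * (Pa - Pb) / 2 * θ)
      = (Pa - Pb) / 2 * (Real.tanh x - x) := by
    rw [Real.tanh_eq_sinh_div_cosh, Real.sinh_eq, Real.cosh_eq]
    have ha : Real.exp (-β * (1 / 2 + θ)) = Real.exp (-(β / 2)) * Real.exp (-x) := by
      rw [← Real.exp_add]; congr 1; rw [hx]; ring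
    have hb : Real.exp (-β * (1 / 2 - θ)) = Real.exp (-(β / 2)) * Real.exp x := by
      rw [← Real.exp_add]; congr 1; rw [hx]; ring
    rw [ha, hb]
    have h1 : (0:ℝ) < Real.exp (-(β / 2)) := Real.exp_pos _
    have h2 : (0:ℝ) < Real.exp x := Real.exp_pos _
    have h3 : (0:ℝ) < Real.exp (-x) := Real.exp_pos _
    field_simp
    ring
  rw [key, abs_mul, abs_of_nonneg (by linarith : (0:ℝ) ≤ (Pa - Pb) / 2)]
  have hb3 : |Real.tanh x - x| ≤ |x| ^ 3 := abs_tanh_sub_le x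
  have hxx : |x| ^ 3 = β ^ 3 * |θ| ^ 3 := by
    rw [hx, abs_mul, abs_of_nonneg hβ]; ring
  calc (Pa - Pb) / 2 * |Real.tanh x - x| ≤ (Pa - Pb) / 2 * (β ^ 3 * |θ| ^ 3) := by
        rw [← hxx]; exact mul_le_mul_of_nonneg_left hb3 (by linarith)
    _ = (Pa - Pb) / 2 * β ^ 3 * |θ| ^ 3 := by ring
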